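/- For Z ~ Beta(1/2,(n−2)/2), n > 3, and 0 < ε < 1/2, setting M₁ = (ε/(ε+1))², the probability P(Z < M₁/n) is bounded above by √(M₁)/(1 − √(M₁)), which equals ε. -/

import Mathlib

open MeasureTheory Real

/-- The Beta function `B(a,b) = Γ(a)Γ(b)/Γ(a+b)`. -/
noncomputable def betaFun (a b : ℝ) : ℝ := Real.Gamma a * Real.Gamma b / Real.Gamma (a + b)

/-- The density of the Beta(a,b) distribution on `[0,1]`. -/
noncomputable def betaPDF (a b x : ℝ) : ℝ :=
  if x ∈ Set.Icc (0 : ℝ) 1 then x ^ (a - 1) * (1 - x) ^ (b - 1) / betaFun a b else 0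

/-- Gautschi-type inequality from log-convexity of Γ. -/
lemma gamma_add_half_le {s : ℝ} (hs : 0 < s) :
    Real.Gamma (s + 1 / 2) ≤ Real.Gamma s * Real.sqrt s := by
  have h1 : 0 < Real.Gamma s := Real.Gamma_pos_of_pos hs
  have h2 : 0 < Real.Gamma (s + 1) := Real.Gamma_pos_of_pos (by linarith)
  have h3 : 0 < Real.Gamma (s + 1 / 2) := Real.Gamma_pos_of_pos (by linarith)
  have hsq : 0 < Real.sqrt s := Real.sqrt_pos.2 hs
  have hc := Real.convexOn_log_Gamma.2 (Set.mem_Ioi.2 hs)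
    (Set.mem_Ioi.2 (by linarith : (0:ℝ) < s + 1))
    (by norm_num : (0:ℝ) ≤ 1 / 2) (by norm_num : (0:ℝ) ≤ 1 / 2) (by norm_num)
  have hcomb : (1/2 : ℝ) • s + (1/2 : ℝ) • (s + 1) = s + 1 / 2 := by
    simp [smul_eq_mul]; ring
  rw [hcomb] at hc
  simp only [Function.comp_apply, smul_eq_mul] at hc
  have hG1 : Real.log (Real.Gamma (s + 1)) = Real.log s + Real.log (Real.Gamma s) := by
    rw [Real.Gamma_add_one hs.ne', Real.log_mul hs.ne' h1.ne']
  rw [hG1] at hc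
  have hlog : Real.log (Real.Gamma (s + 1 / 2)) ≤ Real.log (Real.Gamma s * Real.sqrt s) := by
    rw [Real.log_mul h1.ne' hsq.ne', Real.log_sqrt hs.le]
    linarith
  exact (Real.log_le_log_iff h3 (by positivity)).1 hlog

set_option maxHeartbeats 1000000 in
/-- For `Z ~ Beta(1/2, (n−2)/2)`, `n > 3`, `0 < ε < 1/2`, with `M₁ = (ε/(ε+1))²`:
`P(Z < M₁/n) < √M₁/(1 − √M₁)`, and `√M₁/(1 − √M₁) = ε`. -/
theorem beta_lower_tail_bound (n : ℕ) (hn : 3 < n) (ε : ℝ) (hε0 : 0 < ε)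
    (hε2 : ε < 1 / 2) (M₁ : ℝ) (hM₁ : M₁ = (ε / (ε + 1)) ^ 2) :
    (∫ x in Set.Iio (M₁ / n), betaPDF (1 / 2) (((n : ℝ) - 2) / 2) x) <
      Real.sqrt M₁ / (1 - Real.sqrt M₁) ∧
    Real.sqrt M₁ / (1 - Real.sqrt M₁) = ε := by
  have hε1 : 0 < ε + 1 := by linarith
  have hn4 : (4:ℝ) ≤ (n:ℝ) := by exact_mod_cast hn
  have hnpos : (0:ℝ) < (n:ℝ) := by linarith
  set b : ℝ := ((n : ℝ) - 2) / 2 with hbdef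
  have hb1 : 1 ≤ b := by rw [hbdef]; linarith
  have hb0 : 0 < b := by linarith
  have hsb : 0 < Real.sqrt b := Real.sqrt_pos.2 hb0
  have hs : Real.sqrt M₁ = ε / (ε + 1) := by
    rw [hM₁]; exact Real.sqrt_sq (by positivity)
  have hM₁0 : 0 < M₁ := by rw [hM₁]; positivity
  have hs_pos : 0 < Real.sqrt M₁ := by rw [hs]; positivity
  have hs_lt : Real.sqrt M₁ < 1 / 3 := by
    rw [hs, div_lt_iff₀ hε1]; linarith
  have hM₁1 : M₁ < 1 := by
    nlinarith [Real.sq_sqrt hM₁0.le]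
  set z : ℝ := M₁ / n with hzdef
  have hz0 : 0 < z := by positivity
  have hz1 : z < 1 := by
    rw [hzdef, div_lt_one hnpos]; nlinarith
  -- part 2
  have hpart2 : Real.sqrt M₁ / (1 - Real.sqrt M₁) = ε := by
    rw [hs]
    have h1 : 1 - ε / (ε + 1) = 1 / (ε + 1) := by field_simp; ring
    rw [h1]
    field_simp
  -- positivity of the Beta function value
  have hG12 : 0 < Real.Gamma (1 / 2 : ℝ) := Real.Gamma_pos_of_pos (by norm_num)
  have hGb : 0 < Real.Gamma b := Real.Gamma_pos_of_pos hb0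
  have hGbh : 0 < Real.Gamma (1 / 2 + b) := Real.Gamma_pos_of_pos (by linarith)
  have hB0 : 0 < betaFun (1 / 2) b := by
    unfold betaFun; positivity
  have hPi : 0 < Real.sqrt π := Real.sqrt_pos.2 Real.pi_pos
  -- lower bound on the Beta function
  have hBlow : Real.sqrt π / Real.sqrt b ≤ betaFun (1 / 2) b := by
    have hg : Real.Gamma (b + 1 / 2) ≤ Real.Gamma b * Real.sqrt b := gamma_add_half_le hb0
    unfold betaFun
    rw [Real.Gamma_one_half_eq, show (1:ℝ)/2 + b = b + 1/2 by ring]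
    rw [div_le_div_iff₀ hsb (Real.Gamma_pos_of_pos (by linarith : (0:ℝ) < b + 1/2))]
    calc Real.sqrt π * Real.Gamma (b + 1 / 2) ≤ Real.sqrt π * (Real.Gamma b * Real.sqrt b) := by
          exact mul_le_mul_of_nonneg_left hg hPi.le
      _ = Real.sqrt π * Real.Gamma b * Real.sqrt b := by ring
  -- Step 1: reduce to the integral over (0, z)
  have hIio : (∫ x in Set.Iio z, betaPDF (1 / 2) b x)
      = ∫ x in Set.Ioo 0 z, betaPDF (1 / 2) b x := by
    have hind : ∀ x, betaPDF (1 / 2) b x = Set.indicator (Set.Ioi 0) (betaPDF (1 / 2) b) x := by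
      intro x
      rcases lt_or_ge 0 x with h | h
      · rw [Set.indicator_of_mem (Set.mem_Ioi.2 h)]
      · rw [Set.indicator_of_notMem (by simpa using not_lt.2 h)]
        unfold betaPDF
        rcases eq_or_lt_of_le h with h0 | h0
        · subst h0
          rw [if_pos (by norm_num : (0:ℝ) ∈ Set.Icc (0:ℝ) 1)]
          rw [Real.zero_rpow (by norm_num : (1:ℝ)/2 - 1 ≠ 0)]
          simp
        · rw [if_neg]
          simp only [Set.mem_Icc, not_and_or, not_le]
          left; exact h0
    calc (∫ x in Set.Iio z, betaPDF (1 / 2) b x)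
        = ∫ x in Set.Iio z, Set.indicator (Set.Ioi 0) (betaPDF (1 / 2) b) x := by
          simp_rw [← hind]
      _ = ∫ x in Set.Iio z ∩ Set.Ioi 0, betaPDF (1 / 2) b x :=
          MeasureTheory.setIntegral_indicator measurableSet_Ioi
      _ = ∫ x in Set.Ioo 0 z, betaPDF (1 / 2) b x := by rw [Set.Iio_inter_Ioi]
  -- integrability of the dominating function
  have hint_base : IntegrableOn (fun x : ℝ => x ^ (-(1:ℝ)/2)) (Set.Ioo 0 z) := by
    have h := intervalIntegral.intervalIntegrable_rpow' (a := 0) (b := z)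
      (r := -(1:ℝ)/2) (by norm_num)
    rw [intervalIntegrable_iff'] at h
    exact h.mono_set (by rw [Set.uIcc_of_le hz0.le]; exact Set.Ioo_subset_Icc_self)
  have hint_g : IntegrableOn (fun x : ℝ => x ^ (-(1:ℝ)/2) / betaFun (1/2) b) (Set.Ioo 0 z) :=
    hint_base.div_const _
  -- Step 2: bound the integrand
  have hmono : (∫ x in Set.Ioo 0 z, betaPDF (1 / 2) b x)
      ≤ ∫ x in Set.Ioo 0 z, x ^ (-(1:ℝ)/2) / betaFun (1/2) b := by
    apply MeasureTheory.integral_mono_of_nonneg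
    · apply MeasureTheory.ae_restrict_of_forall_mem measurableSet_Ioo
      intro x hx
      show (0:ℝ) ≤ betaPDF (1/2) b x
      unfold betaPDF
      split_ifs with h
      · obtain ⟨h0, h1⟩ := h
        have := Real.rpow_nonneg h0 ((1:ℝ)/2 - 1)
        have := Real.rpow_nonneg (by linarith : (0:ℝ) ≤ 1 - x) (b - 1)
        positivity
      · exact le_refl 0
    · exact hint_g
    · apply MeasureTheory.ae_restrict_of_forall_mem measurableSet_Ioo
      intro x hx
      show betaPDF (1/2) b x ≤ x ^ (-(1:ℝ)/2) / betaFun (1/2) b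
      obtain ⟨hx0, hxz⟩ := hx
      have hx1 : x < 1 := lt_trans hxz hz1
      unfold betaPDF
      rw [if_pos (Set.mem_Icc.2 ⟨hx0.le, hx1.le⟩)]
      have hrw : x ^ ((1:ℝ)/2 - 1) = x ^ (-(1:ℝ)/2) := by norm_num
      rw [hrw]
      have hone : (1 - x) ^ (b - 1) ≤ 1 :=
        Real.rpow_le_one (by linarith) (by linarith) (by linarith)
      have hnn : (0:ℝ) ≤ x ^ (-(1:ℝ)/2) := Real.rpow_nonneg hx0.le _
      have hnum : x ^ (-(1:ℝ)/2) * (1 - x) ^ (b - 1) ≤ x ^ (-(1:ℝ)/2) := by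
        nlinarith [Real.rpow_nonneg (show (0:ℝ) ≤ 1 - x by linarith) (b - 1)]
      gcongr
  -- Step 3: compute the dominating integral
  have hcalc : (∫ x in Set.Ioo 0 z, x ^ (-(1:ℝ)/2) / betaFun (1/2) b)
      = 2 * Real.sqrt z / betaFun (1/2) b := by
    rw [integral_div]
    congr 1
    rw [← MeasureTheory.integral_Ioc_eq_integral_Ioo,
      ← intervalIntegral.integral_of_le hz0.le,
      integral_rpow (Or.inl (by norm_num : (-1:ℝ) < -(1:ℝ)/2))]
    rw [show (-(1:ℝ)/2 + 1) = 1/2 by norm_num,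
      Real.zero_rpow (by norm_num : (1:ℝ)/2 ≠ 0), Real.sqrt_eq_rpow]
    ring
  -- Step 4: the arithmetic estimate
  have hkey : 2 * Real.sqrt z / betaFun (1/2) b < Real.sqrt M₁ / (1 - Real.sqrt M₁) := by
    have hsz : 0 ≤ Real.sqrt z := Real.sqrt_nonneg _
    have h1 : 2 * Real.sqrt z / betaFun (1/2) b
        ≤ 2 * Real.sqrt z * Real.sqrt b / Real.sqrt π := by
      rw [div_le_div_iff₀ hB0 hPi]
      calc 2 * Real.sqrt z * Real.sqrt π
          ≤ 2 * Real.sqrt z * (betaFun (1/2) b * Real.sqrt b) :=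
            mul_le_mul_of_nonneg_left (by rwa [div_le_iff₀ hsb] at hBlow) (by positivity)
        _ = 2 * Real.sqrt z * Real.sqrt b * betaFun (1/2) b := by ring
    have h3 : 2 * Real.sqrt z * Real.sqrt b / Real.sqrt π < Real.sqrt M₁ := by
      rw [div_lt_iff₀ hPi]
      have hA : Real.sqrt z ^ 2 = z := Real.sq_sqrt hz0.le
      have hBb : Real.sqrt b ^ 2 = b := Real.sq_sqrt hb0.le
      have hP : Real.sqrt π ^ 2 = π := Real.sq_sqrt Real.pi_pos.le
      have hS : Real.sqrt M₁ ^ 2 = M₁ := Real.sq_sqrt hM₁0.le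
      have hpi3 : (3:ℝ) < π := Real.pi_gt_three
      have hsq : (2 * Real.sqrt z * Real.sqrt b) ^ 2 < (Real.sqrt M₁ * Real.sqrt π) ^ 2 := by
        have hzb2 : z * b < M₁ / 2 := by
          rw [hzdef, hbdef, div_mul_div_comm,
            div_lt_div_iff₀ (by positivity) (by norm_num : (0:ℝ) < 2)]
          nlinarith [hM₁0]
        calc (2 * Real.sqrt z * Real.sqrt b) ^ 2 = 4 * (z * b) := by
              rw [mul_pow, mul_pow, hA, hBb]; ring
          _ < 4 * (M₁ / 2) := by linarith
          _ = 2 * M₁ := by ring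
          _ < M₁ * π := by nlinarith [mul_pos hM₁0 (show (0:ℝ) < π - 2 by linarith)]
          _ = (Real.sqrt M₁ * Real.sqrt π) ^ 2 := by rw [mul_pow, hS, hP]
      exact lt_of_pow_lt_pow_left₀ 2 (by positivity) hsq
    have h4 : Real.sqrt M₁ ≤ Real.sqrt M₁ / (1 - Real.sqrt M₁) :=
      le_div_self hs_pos.le (by linarith) (by linarith)
    linarith
  refine ⟨?_, hpart2⟩
  calc (∫ x in Set.Iio z, betaPDF (1 / 2) b x)
      = ∫ x in Set.Ioo 0 z, betaPDF (1 / 2) b x := hIio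
    _ ≤ ∫ x in Set.Ioo 0 z, x ^ (-(1:ℝ)/2) / betaFun (1/2) b := hmono
    _ = 2 * Real.sqrt z / betaFun (1/2) b := hcalc
    _ < Real.sqrt M₁ / (1 - Real.sqrt M₁) := hkey
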